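/- With τ and u as above, define t(n) = n − 2u(n) for n ≥ 2. Then t(n)/u(n) → 0 as n → ∞, and if moreover τ(n) → ∞, then t(n) → ∞ as n → ∞. -/

import Mathlib

open Filter

theorem stmt_1 (τ : ℕ → ℕ) (hτmono : Monotone τ) (hτ1 : τ 1 = 0)
    (hτle : ∀ n, τ n ≤ n)
    (hτlim : Tendsto (fun n => (τ n : ℝ) / (n : ℝ)) atTop (nhds 0))
    (u : ℕ → ℕ) (hu1 : u 1 = 1)
    (hu : ∀ n, 2 ≤ n →
      1 ≤ u n ∧ 2 * u n + τ (u n) ≤ n ∧ ∀ m, 1 ≤ m → 2 * m + τ m ≤ n → m ≤ u n)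
    (t : ℕ → ℕ) (ht : ∀ n, 2 ≤ n → t n = n - 2 * u n) :
    Tendsto (fun n => (t n : ℝ) / (u n : ℝ)) atTop (nhds 0) ∧
    (Tendsto τ atTop atTop → Tendsto t atTop atTop) := by
  have huTop : Tendsto u atTop atTop := by
    rw [tendsto_atTop]
    intro b
    filter_upwards [eventually_ge_atTop (max 2 (3 * (max b 1)))] with n hn
    have h2 : 2 ≤ n := le_trans (le_max_left _ _) hn
    have h3 : 3 * (max b 1) ≤ n := le_trans (le_max_right _ _) hn
    have hτ := hτle (max b 1)
    have := (hu n h2).2.2 (max b 1) (le_max_right _ _) (by omega)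
    omega
  have hlb : ∀ n, 2 ≤ n → τ (u n) ≤ t n := by
    intro n hn
    have h := (hu n hn).2.1
    rw [ht n hn]; omega
  have hub : ∀ n, 2 ≤ n → t n ≤ 1 + τ (u n + 1) := by
    intro n hn
    by_contra h
    push_neg at h
    have h1 := (hu n hn).2.1
    rw [ht n hn] at h
    have h2 := (hu n hn).2.2 (u n + 1) (by omega) (by omega)
    omega
  constructor
  · have hG : Tendsto (fun m : ℕ => (2 + (τ (m + 1) : ℝ)) / m) atTop (nhds 0) := by
      have ha := tendsto_const_div_atTop_nhds_zero_nat (2 : ℝ)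
      have hb := (hτlim.comp (tendsto_add_atTop_nat 1)).const_mul 2
      have h1 := ha.add hb
      rw [mul_zero, add_zero] at h1
      apply squeeze_zero' (g := fun m : ℕ =>
        (2 : ℝ) / m + 2 * ((τ (m + 1) : ℝ) / ((m : ℝ) + 1)))
      · filter_upwards with m; positivity
      · filter_upwards [eventually_ge_atTop 1] with m hm
        have hm' : (1 : ℝ) ≤ m := by exact_mod_cast hm
        have hmem : (0 : ℝ) < m := by linarith
        have hm1 : (0 : ℝ) < (m : ℝ) + 1 := by linarith
        have hτpos : (0 : ℝ) ≤ (τ (m + 1) : ℝ) := by positivity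
        rw [add_div]
        have key : (τ (m + 1) : ℝ) / m ≤ 2 * ((τ (m + 1) : ℝ) / ((m : ℝ) + 1)) := by
          rw [mul_div_assoc', div_le_div_iff₀ hmem hm1]
          nlinarith
        linarith
      · have : ∀ m : ℕ, ((fun n : ℕ => (τ n : ℝ) / n) ∘ (fun n => n + 1)) m
            = (τ (m + 1) : ℝ) / ((m : ℝ) + 1) := by
          intro m; simp [Function.comp]
        simpa [Function.comp] using h1
    apply squeeze_zero' (g := fun n => (2 + (τ (u n + 1) : ℝ)) / (u n : ℝ))
    · filter_upwards with n; positivity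
    · filter_upwards [eventually_ge_atTop 2] with n hn
      have h1 := hub n hn
      have hu1' : 1 ≤ u n := (hu n hn).1
      have htle : (t n : ℝ) ≤ 2 + (τ (u n + 1) : ℝ) := by
        have : (t n : ℝ) ≤ 1 + (τ (u n + 1) : ℝ) := by exact_mod_cast h1
        linarith
      gcongr
    · exact hG.comp huTop
  · intro hτtop
    apply tendsto_atTop_mono' atTop ?_ (hτtop.comp huTop)
    filter_upwards [eventually_ge_atTop 2] with n hn
    exact hlb n hn
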